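/- Let C be a bivariate extreme value copula with upper tail dependence coefficient λ ∈ [0,1]. Then for all u, v ∈ [0,1], C(u,v) ≥ min{u^(1-λ) · v, u · v^(1-λ)} (i.e., C is bounded below pointwise by the Marshall–Olkin copula with both parameters equal to λ). -/

import Mathlib

open MeasureTheory Filter Set Real

noncomputable section

/-- A bivariate copula: boundary conditions and the 2-increasing property. -/
def IsCopula (C : ℝ → ℝ → ℝ) : Prop :=
  (∀ u : ℝ, 0 ≤ u → u ≤ 1 → C u 0 = 0 ∧ C 0 u = 0 ∧ C u 1 = u ∧ C 1 u = u) ∧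
  (∀ u₁ u₂ v₁ v₂ : ℝ, 0 ≤ u₁ → u₁ ≤ u₂ → u₂ ≤ 1 → 0 ≤ v₁ → v₁ ≤ v₂ → v₂ ≤ 1 →
    0 ≤ C u₂ v₂ - C u₂ v₁ - C u₁ v₂ + C u₁ v₁)

/-- An extreme value copula: a copula satisfying the max-stability identity. -/
def IsExtremeValueCopula (C : ℝ → ℝ → ℝ) : Prop :=
  IsCopula C ∧ ∀ s : ℝ, 0 < s → ∀ u v : ℝ, 0 ≤ u → u ≤ 1 → 0 ≤ v → v ≤ 1 →
    C (u ^ s) (v ^ s) = C u v ^ s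

/-- `C` has upper tail dependence coefficient `lam`,
i.e. `lam = 2 - lim_{t → 1⁻} (1 - C t t)/(1 - t)`. -/
def HasUpperTailDep (C : ℝ → ℝ → ℝ) (lam : ℝ) : Prop :=
  Tendsto (fun t : ℝ => (1 - C t t) / (1 - t)) (nhdsWithin 1 (Set.Iio 1))
    (nhds (2 - lam))

/-- The transpose of an extreme value copula is an extreme value copula. -/
lemma evc_swap {C : ℝ → ℝ → ℝ} (hC : IsExtremeValueCopula C) :
    IsExtremeValueCopula (fun u v => C v u) := by
  obtain ⟨⟨hb, h2⟩, hms⟩ := hC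
  refine ⟨⟨fun u hu0 hu1 => ?_, fun u₁ u₂ v₁ v₂ h1 h2' h3 h4 h5 h6 => ?_⟩,
    fun s hs u v hu0 hu1 hv0 hv1 => ?_⟩
  · obtain ⟨a, b, c, d⟩ := hb u hu0 hu1
    exact ⟨b, a, d, c⟩
  · have := h2 v₁ v₂ u₁ u₂ h4 h5 h6 h1 h2' h3
    dsimp only
    linarith
  · exact hms s hs v u hv0 hv1 hu0 hu1

/-- The diagonal of an extreme value copula is a power function. -/
lemma diag_rpow {C : ℝ → ℝ → ℝ} (hC : IsExtremeValueCopula C) :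
    ∃ θ : ℝ, 0 < θ ∧ ∀ t : ℝ, 0 ≤ t → t ≤ 1 → C t t = t ^ θ := by
  obtain ⟨⟨hb, h2⟩, hms⟩ := hC
  set t0 : ℝ := 3/4 with ht0def
  have ht00 : (0:ℝ) ≤ t0 := by norm_num
  have ht01 : t0 ≤ 1 := by norm_num
  -- Fréchet bound: C t0 t0 ≥ 2 t0 - 1 = 1/2
  have hfr := h2 t0 1 t0 1 ht00 ht01 le_rfl ht00 ht01 le_rfl
  obtain ⟨b1, b2, b3, b4⟩ := hb t0 ht00 ht01
  obtain ⟨c1, c2, c3, c4⟩ := hb 1 zero_le_one le_rfl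
  have hclb : (1/2 : ℝ) ≤ C t0 t0 := by
    have : C 1 1 = 1 := c3
    simp only [ht0def] at *
    linarith
  -- upper bound : C t0 t0 ≤ t0
  have hub := h2 0 t0 t0 1 le_rfl ht00 ht01 ht00 ht01 le_rfl
  obtain ⟨d1, d2, d3, d4⟩ := hb 0 le_rfl zero_le_one
  have hcub : C t0 t0 ≤ t0 := by
    obtain ⟨e1, e2, e3, e4⟩ := hb t0 ht00 ht01
    simp only [ht0def] at *
    linarith
  have hcpos : 0 < C t0 t0 := lt_of_lt_of_le (by norm_num) hclb
  have hc1 : C t0 t0 < 1 := lt_of_le_of_lt hcub (by norm_num)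
  have hlogc : Real.log (C t0 t0) < 0 := Real.log_neg hcpos hc1
  have hlogt0 : Real.log t0 < 0 := Real.log_neg (by norm_num) (by norm_num)
  refine ⟨Real.log (C t0 t0) / Real.log t0, div_pos_of_neg_of_neg hlogc hlogt0, ?_⟩
  set θ : ℝ := Real.log (C t0 t0) / Real.log t0 with hθdef
  have hθpos : 0 < θ := div_pos_of_neg_of_neg hlogc hlogt0
  have hkey : C t0 t0 = t0 ^ θ := by
    have hmul : Real.log t0 * θ = Real.log (C t0 t0) := by
      rw [hθdef]; field_simp
      exact mul_div_cancel_left₀ _ hlogt0.ne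
    rw [Real.rpow_def_of_pos (by norm_num : (0:ℝ) < t0), hmul, Real.exp_log hcpos]
  intro t ht0' ht1
  rcases eq_or_lt_of_le ht0' with h0 | htpos
  · -- t = 0
    rw [← h0]
    rw [(hb 0 le_rfl zero_le_one).1, Real.zero_rpow (ne_of_gt hθpos)]
  rcases eq_or_lt_of_le ht1 with h1 | htlt
  · rw [h1, c3, Real.one_rpow]
  -- t ∈ (0,1)
  set s : ℝ := Real.log t / Real.log t0 with hsdef
  have hlogt : Real.log t < 0 := Real.log_neg htpos htlt
  have hspos : 0 < s := div_pos_of_neg_of_neg hlogt hlogt0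
  have hts : t0 ^ s = t := by
    have hmul : Real.log t0 * s = Real.log t := by
      rw [hsdef]; field_simp
      exact mul_div_cancel_left₀ _ hlogt0.ne
    rw [Real.rpow_def_of_pos (by norm_num : (0:ℝ) < t0), hmul, Real.exp_log htpos]
  have hmst := hms s hspos t0 t0 ht00 ht01 ht00 ht01
  rw [hts] at hmst
  rw [hmst, hkey, ← Real.rpow_mul ht00,
    Real.rpow_def_of_pos (by norm_num : (0:ℝ) < t0),
    Real.rpow_def_of_pos htpos]
  congr 1
  rw [hsdef]
  field_simp
  ring
  rw [mul_comm (Real.log t0), mul_inv_cancel_right₀ hlogt0.ne]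

/-- identify θ with 2 - lam from the tail limit -/
lemma theta_eq {C : ℝ → ℝ → ℝ} {lam θ : ℝ} (hθ : 0 < θ)
    (hdiag : ∀ t : ℝ, 0 ≤ t → t ≤ 1 → C t t = t ^ θ)
    (hU : HasUpperTailDep C lam) : θ = 2 - lam := by
  have hderiv : HasDerivAt (fun x : ℝ => x ^ θ) θ 1 := by
    have := Real.hasDerivAt_rpow_const (x := (1:ℝ)) (p := θ) (Or.inl one_ne_zero)
    simpa using this
  have hslope : Tendsto (fun t : ℝ => (1 - t ^ θ) / (1 - t))
      (nhdsWithin 1 (Set.Iio 1)) (nhds θ) := by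
    have h1 := hasDerivAt_iff_tendsto_slope.mp hderiv
    have h2 : nhdsWithin (1:ℝ) (Set.Iio 1) ≤ nhdsWithin 1 ({1}ᶜ) :=
      nhdsWithin_mono 1 (fun x hx => ne_of_lt hx)
    have h3 := h1.mono_left h2
    refine h3.congr' ?_
    filter_upwards [self_mem_nhdsWithin] with t ht
    rw [slope_def_field, Real.one_rpow, ← neg_sub (1:ℝ) (t ^ θ), ← neg_sub (1:ℝ) t,
      neg_div_neg_eq]
  have : Tendsto (fun t : ℝ => (1 - C t t) / (1 - t))
      (nhdsWithin 1 (Set.Iio 1)) (nhds θ) := by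
    refine hslope.congr' ?_
    filter_upwards [Ioo_mem_nhdsLT_of_mem (Set.mem_Ioc.mpr ⟨(by norm_num : (0:ℝ) < 1), le_rfl⟩)]
      with t ht
    rw [hdiag t (le_of_lt ht.1) (le_of_lt ht.2)]
  have := tendsto_nhds_unique hU this
  linarith

/-- core inequality: for 0 < u ≤ v ≤ 1, C u v ≥ u * v^(θ-1) -/
lemma core {C : ℝ → ℝ → ℝ} (hC : IsExtremeValueCopula C) {θ : ℝ} (hθ : 0 < θ)
    (hdiag : ∀ t : ℝ, 0 ≤ t → t ≤ 1 → C t t = t ^ θ)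
    {u v : ℝ} (hu : 0 < u) (huv : u ≤ v) (hv : v ≤ 1) :
    u * v ^ (θ - 1) ≤ C u v := by
  have hvpos : 0 < v := lt_of_lt_of_le hu huv
  have hu1 : u ≤ 1 := le_trans huv hv
  set a := Real.log u with ha
  set b := Real.log v with hbdef
  set g : ℝ → ℝ := fun h => Real.exp (θ*b*h) - Real.exp (b*h) + Real.exp (a*h) with hg
  have hg0 : g 0 = 1 := by simp [hg]
  have hgd : HasDerivAt g (θ*b - b + a) 0 := by
    have h1 : HasDerivAt (fun x : ℝ => Real.exp (θ*b*x)) (θ*b) 0 := by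
      simpa using (((hasDerivAt_id (0:ℝ)).const_mul (θ*b)).exp)
    have h2 : HasDerivAt (fun x : ℝ => Real.exp (b*x)) b 0 := by
      simpa using (((hasDerivAt_id (0:ℝ)).const_mul b).exp)
    have h3 : HasDerivAt (fun x : ℝ => Real.exp (a*x)) a 0 := by
      simpa using (((hasDerivAt_id (0:ℝ)).const_mul a).exp)
    exact (h1.sub h2).add h3
  set f : ℝ → ℝ := fun h => Real.log (g h) with hf
  have hf0 : f 0 = 0 := by simp [hf, hg0]
  have hfd : HasDerivAt f (θ*b - b + a) 0 := by
    have := hgd.log (by rw [hg0]; norm_num)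
    simpa [hf, hg0] using this
  have hslope := hasDerivAt_iff_tendsto_slope.mp hfd
  have hinv : Tendsto (fun s : ℝ => s⁻¹) atTop (nhdsWithin 0 (Set.Ioi 0)) :=
    tendsto_inv_atTop_nhdsGT_zero
  have hinv' : Tendsto (fun s : ℝ => s⁻¹) atTop (nhdsWithin 0 ({0}ᶜ)) :=
    hinv.mono_right (nhdsWithin_mono 0 (fun x hx => ne_of_gt hx))
  have hmain : Tendsto (fun s : ℝ => s * f s⁻¹) atTop (nhds (θ*b - b + a)) := by
    refine (hslope.comp hinv').congr' ?_
    filter_upwards [eventually_gt_atTop (0:ℝ)] with s hs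
    have hs0 : s ≠ 0 := ne_of_gt hs
    simp only [Function.comp_apply, slope_def_field, hf0]
    rw [sub_zero, sub_zero, div_eq_iff (inv_ne_zero hs0)]
    field_simp
  have hval : Real.exp (θ*b - b + a) = u * v ^ (θ - 1) := by
    have he : θ*b - b + a = a + b*(θ-1) := by ring
    rw [he, Real.exp_add, Real.exp_log hu, Real.rpow_def_of_pos hvpos]
  have hexp : Tendsto (fun s : ℝ => Real.exp (s * f s⁻¹)) atTop
      (nhds (u * v ^ (θ - 1))) := by
    rw [← hval]
    exact (Real.continuous_exp.tendsto _).comp hmain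
  refine le_of_tendsto hexp ?_
  have hgpos : ∀ᶠ s : ℝ in atTop, 0 < g s⁻¹ := by
    have hc : Tendsto (fun s : ℝ => g s⁻¹) atTop (nhds 1) := by
      have h0 : Tendsto (fun s : ℝ => s⁻¹) atTop (nhds (0:ℝ)) := tendsto_inv_atTop_zero
      simpa [hg0, Function.comp_def] using (hgd.continuousAt.tendsto.comp h0)
    exact hc.eventually (eventually_gt_nhds one_pos)
  filter_upwards [hgpos, eventually_gt_atTop (0:ℝ)] with s hgs hs
  have hs0 : s ≠ 0 := ne_of_gt hs
  set h : ℝ := s⁻¹ with hh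
  have hhpos : 0 < h := inv_pos.mpr hs
  set p := u ^ h with hp
  set q := v ^ h with hq
  have hppos : 0 < p := Real.rpow_pos_of_pos hu h
  have hqpos : 0 < q := Real.rpow_pos_of_pos hvpos h
  have hpq : p ≤ q := Real.rpow_le_rpow hu.le huv hhpos.le
  have hq1 : q ≤ 1 := Real.rpow_le_one hvpos.le hv hhpos.le
  have hp1 : p ≤ 1 := le_trans hpq hq1
  have h2inc := hC.1.2 p q q 1 hppos.le hpq hq1 hqpos.le hq1 le_rfl
  have bq := (hC.1.1 q hqpos.le hq1).2.2.1
  have bp := (hC.1.1 p hppos.le hp1).2.2.1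
  have hdq := hdiag q hqpos.le hq1
  rw [bq, bp, hdq] at h2inc
  have hkey : q ^ θ + p - q ≤ C p q := by linarith
  have hgq : g h = q ^ θ + p - q := by
    have e1 : Real.exp (θ*b*h) = q ^ θ := by
      rw [hq, Real.rpow_def_of_pos hqpos, hq, Real.log_rpow hvpos]
      congr 1; ring
    have e2 : Real.exp (b*h) = q := by
      rw [hq, Real.rpow_def_of_pos hvpos]
    have e3 : Real.exp (a*h) = p := by
      rw [hp, Real.rpow_def_of_pos hu]
    rw [hg]; dsimp only
    rw [e1, e2, e3]; ring
  have hms := hC.2 s hs p q hppos.le hp1 hqpos.le hq1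
  have hps : p ^ s = u := by
    rw [hp, ← Real.rpow_mul hu.le, hh, inv_mul_cancel₀ hs0, Real.rpow_one]
  have hqs : q ^ s = v := by
    rw [hq, ← Real.rpow_mul hvpos.le, hh, inv_mul_cancel₀ hs0, Real.rpow_one]
  rw [hps, hqs] at hms
  have hfinal : g h ^ s ≤ C p q ^ s :=
    Real.rpow_le_rpow hgs.le (hgq ▸ hkey) hs.le
  calc Real.exp (s * f h) = g h ^ s := by
        rw [Real.rpow_def_of_pos hgs, hf]; ring_nf
    _ ≤ C p q ^ s := hfinal
    _ = C u v := hms.symm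

theorem stmt_0 (C : ℝ → ℝ → ℝ) (lam : ℝ) (hlam : lam ∈ Set.Icc (0:ℝ) 1)
    (hC : IsExtremeValueCopula C) (hU : HasUpperTailDep C lam) :
    ∀ u v : ℝ, u ∈ Set.Icc (0:ℝ) 1 → v ∈ Set.Icc (0:ℝ) 1 →
      min (u ^ (1 - lam) * v) (u * v ^ (1 - lam)) ≤ C u v := by
  obtain ⟨θ, hθpos, hdiag⟩ := diag_rpow hC
  have hθeq : θ = 2 - lam := theta_eq hθpos hdiag hU
  have h1lam : 1 - lam = θ - 1 := by linarith
  intro u v ⟨hu0, hu1⟩ ⟨hv0, hv1⟩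
  have hnn : 0 ≤ C u v := by
    have h := hC.1.2 0 u 0 v le_rfl hu0 hu1 le_rfl hv0 hv1
    have b1 := (hC.1.1 u hu0 hu1).1
    have b2 := (hC.1.1 v hv0 hv1).2.1
    have b3 := (hC.1.1 0 le_rfl zero_le_one).1
    linarith
  rcases le_total u v with huv | hvu
  · refine le_trans (min_le_right _ _) ?_
    rcases eq_or_lt_of_le hu0 with h0 | hupos
    · rw [← h0] at hnn ⊢
      simpa using hnn
    rw [h1lam]
    exact core hC hθpos hdiag hupos huv hv1
  · refine le_trans (min_le_left _ _) ?_
    rcases eq_or_lt_of_le hv0 with h0 | hvpos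
    · rw [← h0] at hnn ⊢
      simpa using hnn
    rw [h1lam]
    have hswap := evc_swap hC
    have hdiag' : ∀ t : ℝ, 0 ≤ t → t ≤ 1 → (fun u v => C v u) t t = t ^ θ :=
      fun t a b => hdiag t a b
    have := core hswap hθpos hdiag' hvpos hvu hu1
    calc u ^ (θ-1) * v = v * u ^ (θ-1) := by ring
    _ ≤ C u v := this
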